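/- Let Γ_{1/2} = B Γ_∞ B⁻¹ where B = (1 0; 2 1) (so that B·∞ = 1/2), and let Γ̂_{1/2} be the subgroup of GL(2,ℤ) generated by Γ_{1/2} ∪ Γ_∞. For coprime integers q̃, p̃ with p̃ ≥ 1, the point q̃/p̃ of ℙ¹(ℚ) belongs to the Γ̂_{1/2}-orbit of 1/2 or of ∞ if and only if p̃ is even. [Example 3.3: r = 1/2, the Hopf link case] -/

import Mathlib

open Matrix

/-- The group `GL(2,ℤ)`. -/
abbrev GL2Z := Matrix.GeneralLinearGroup (Fin 2) ℤ

/-- The projective line `ℙ¹(ℚ)`. -/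
abbrev P1Q := Projectivization ℚ (Fin 2 → ℚ)

/-- The point `∞ = [1 : 0]` of `ℙ¹(ℚ)`. -/
noncomputable def infty : P1Q :=
  Projectivization.mk ℚ ![1, 0] (by
    intro h; simpa using congrFun h 0)

/-- The point `[x : 1]` of `ℙ¹(ℚ)` corresponding to the rational number `x`. -/
noncomputable def ratPt (x : ℚ) : P1Q :=
  Projectivization.mk ℚ ![x, 1] (by
    intro h; simpa using congrFun h 1)

/-- A matrix in `GL(2,ℤ)` viewed as an invertible matrix over `ℚ`. -/
def glq (M : GL2Z) : Matrix.GeneralLinearGroup (Fin 2) ℚ :=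
  Matrix.GeneralLinearGroup.map (Int.castRingHom ℚ) M

lemma glq_inj (M : GL2Z) :
    Function.Injective ((glq M).val.mulVecLin) := by
  have h : ((glq M)⁻¹).val.mulVecLin ∘ₗ (glq M).val.mulVecLin = LinearMap.id := by
    rw [← Matrix.mulVecLin_mul]
    have : ((glq M)⁻¹).val * (glq M).val = 1 := by
      rw [← Units.val_mul, inv_mul_cancel, Units.val_one]
    rw [this, Matrix.mulVecLin_one]
  intro x y hxy
  have := congrArg ((glq M)⁻¹).val.mulVecLin hxy
  calc x = (((glq M)⁻¹).val.mulVecLin ∘ₗ (glq M).val.mulVecLin) x := by rw [h]; rfl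
    _ = (((glq M)⁻¹).val.mulVecLin ∘ₗ (glq M).val.mulVecLin) y := by
        simpa using this
    _ = y := by rw [h]; rfl

/-- The action of `GL(2,ℤ)` on `ℙ¹(ℚ)` by linear fractional transformations:
`(a b; c d)` sends `[x : y]` to `[ax + by : cx + dy]`. -/
noncomputable def act (M : GL2Z) (x : P1Q) : P1Q :=
  Projectivization.map ((glq M).val.mulVecLin) (glq_inj M) x

/-- The matrix `A₁ = (-1 0; 0 1)`, acting by `x ↦ -x`. -/
def A1 : GL2Z :=
  ⟨!![-1, 0; 0, 1], !![-1, 0; 0, 1], by decide, by decide⟩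

/-- The matrix `A₂ = (-1 2; 0 1)`, acting by `x ↦ 2 - x`. -/
def A2 : GL2Z :=
  ⟨!![-1, 2; 0, 1], !![-1, 2; 0, 1], by decide, by decide⟩

/-- The group `Γ_∞`, generated by the reflections `A₁` and `A₂`. -/
def GammaInf : Subgroup GL2Z := Subgroup.closure {A1, A2}

/-- The group `Γ_r = B Γ_∞ B⁻¹`, for `B ∈ GL(2,ℤ)` with `B·∞ = r`. -/
def Gamma (B : GL2Z) : Subgroup GL2Z :=
  GammaInf.map (MulAut.conj B).toMonoidHom

/-- The group `Γ̂_r`, generated by `Γ_r ∪ Γ_∞`. -/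
def GammaHat (B : GL2Z) : Subgroup GL2Z := Gamma B ⊔ GammaInf

/-- The matrix `B = (1 0; 2 1)`, with `B·∞ = 1/2`. -/
def Bhalf : GL2Z :=
  ⟨!![1, 0; 2, 1], !![1, 0; -2, 1], by decide, by decide⟩

/-! ### Auxiliary infrastructure -/

/-- The translation matrix `T = (1 2; 0 1)`, acting by `x ↦ x + 2`. -/
def Tmat : GL2Z :=
  ⟨!![1, 2; 0, 1], !![1, -2; 0, 1], by decide, by decide⟩

lemma Tmat_eq : Tmat = A2 * A1 := by ext : 1; decide

lemma memA1 : A1 ∈ GammaHat Bhalf :=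
  (le_sup_right : GammaInf ≤ GammaHat Bhalf)
    (Subgroup.subset_closure (by simp))

lemma memA2 : A2 ∈ GammaHat Bhalf :=
  (le_sup_right : GammaInf ≤ GammaHat Bhalf)
    (Subgroup.subset_closure (by simp))

lemma memT : Tmat ∈ GammaHat Bhalf := by
  rw [Tmat_eq]; exact mul_mem memA2 memA1

lemma memBA1B : Bhalf * A1 * Bhalf⁻¹ ∈ GammaHat Bhalf := by
  refine (le_sup_left : Gamma Bhalf ≤ GammaHat Bhalf) ?_
  exact Subgroup.mem_map.2 ⟨A1, Subgroup.subset_closure (by simp), rfl⟩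

lemma memB2 : Bhalf * Bhalf ∈ GammaHat Bhalf := by
  have h : Bhalf * Bhalf = (Bhalf * A1 * Bhalf⁻¹) * A1 := by ext : 1; decide
  rw [h]; exact mul_mem memBA1B memA1

lemma gammaHat_eq_closure :
    GammaHat Bhalf
      = Subgroup.closure ((((MulAut.conj Bhalf).toMonoidHom : GL2Z →* GL2Z) '' {A1, A2})
          ∪ {A1, A2}) := by
  rw [Subgroup.closure_union, ← MonoidHom.map_closure]
  rfl

lemma conjB_mem {M : GL2Z} (hM : M ∈ GammaHat Bhalf) :
    Bhalf * M * Bhalf⁻¹ ∈ GammaHat Bhalf := by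
  rw [gammaHat_eq_closure] at hM
  induction hM using Subgroup.closure_induction with
  | mem x hx =>
    rcases hx with ⟨y, hy, rfl⟩ | hx
    · have h : Bhalf * (MulAut.conj Bhalf).toMonoidHom y * Bhalf⁻¹
          = (Bhalf * Bhalf) * y * (Bhalf * Bhalf)⁻¹ := by
        simp [MulAut.conj_apply]; group
      rw [h]
      have hy' : y ∈ GammaHat Bhalf :=
        (le_sup_right : GammaInf ≤ GammaHat Bhalf) (Subgroup.subset_closure hy)
      exact mul_mem (mul_mem memB2 hy') (inv_mem memB2)
    · exact (le_sup_left : Gamma Bhalf ≤ GammaHat Bhalf)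
        (Subgroup.mem_map.2 ⟨x, Subgroup.subset_closure hx, rfl⟩)
  | one => simpa using (one_mem (GammaHat Bhalf))
  | mul x y hx hy ihx ihy =>
    have h : Bhalf * (x * y) * Bhalf⁻¹
        = (Bhalf * x * Bhalf⁻¹) * (Bhalf * y * Bhalf⁻¹) := by group
    rw [h]; exact mul_mem ihx ihy
  | inv x hx ihx =>
    have h : Bhalf * x⁻¹ * Bhalf⁻¹ = (Bhalf * x * Bhalf⁻¹)⁻¹ := by group
    rw [h]; exact inv_mem ihx

lemma conjBinv_mem {M : GL2Z} (hM : M ∈ GammaHat Bhalf) :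
    Bhalf⁻¹ * M * Bhalf ∈ GammaHat Bhalf := by
  rw [gammaHat_eq_closure] at hM
  induction hM using Subgroup.closure_induction with
  | mem x hx =>
    rcases hx with ⟨y, hy, rfl⟩ | hx
    · have h : Bhalf⁻¹ * (MulAut.conj Bhalf).toMonoidHom y * Bhalf = y := by
        simp [MulAut.conj_apply]; group
      rw [h]
      exact (le_sup_right : GammaInf ≤ GammaHat Bhalf) (Subgroup.subset_closure hy)
    · have h : Bhalf⁻¹ * x * Bhalf
          = (Bhalf * Bhalf)⁻¹ * (Bhalf * x * Bhalf⁻¹) * (Bhalf * Bhalf) := by group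
      rw [h]
      have hx' : Bhalf * x * Bhalf⁻¹ ∈ GammaHat Bhalf :=
        (le_sup_left : Gamma Bhalf ≤ GammaHat Bhalf)
          (Subgroup.mem_map.2 ⟨x, Subgroup.subset_closure hx, rfl⟩)
      exact mul_mem (mul_mem (inv_mem memB2) hx') memB2
  | one => simpa using (one_mem (GammaHat Bhalf))
  | mul x y hx hy ihx ihy =>
    have h : Bhalf⁻¹ * (x * y) * Bhalf
        = (Bhalf⁻¹ * x * Bhalf) * (Bhalf⁻¹ * y * Bhalf) := by group
    rw [h]; exact mul_mem ihx ihy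
  | inv x hx ihx =>
    have h : Bhalf⁻¹ * x⁻¹ * Bhalf = (Bhalf⁻¹ * x * Bhalf)⁻¹ := by group
    rw [h]; exact inv_mem ihx

/-! ### Computation lemmas for the action -/

lemma mk_congr (v w : Fin 2 → ℚ) (h : v = w) (hv : v ≠ 0) :
    Projectivization.mk ℚ v hv = Projectivization.mk ℚ w (h ▸ hv) := by subst h; rfl

lemma ne_zero_of_fst {x y : ℚ} (h : x ≠ 0) : ![x, y] ≠ 0 := by
  intro h0; exact h (by simpa using congrFun h0 0)

lemma ne_zero_of_snd {x y : ℚ} (h : y ≠ 0) : ![x, y] ≠ 0 := by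
  intro h0; exact h (by simpa using congrFun h0 1)

lemma act_mk (M : GL2Z) (x y x' y' : ℚ) (hv : ![x,y] ≠ 0) (hv' : ![x',y'] ≠ 0)
    (hx : (M.val 0 0 : ℚ) * x + (M.val 0 1 : ℚ) * y = x')
    (hy : (M.val 1 0 : ℚ) * x + (M.val 1 1 : ℚ) * y = y') :
    act M (Projectivization.mk ℚ ![x,y] hv) = Projectivization.mk ℚ ![x',y'] hv' := by
  rw [act, Projectivization.map_mk]
  have h : (glq M).val.mulVecLin ![x, y] = ![x', y'] := by
    funext i
    fin_cases i <;>
      simp [glq, Matrix.GeneralLinearGroup.map, mulVec, dotProduct, Fin.sum_univ_two,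
        ← hx, ← hy]
  rw [mk_congr _ _ h]

lemma act_mul (M N : GL2Z) (x : P1Q) : act (M * N) x = act M (act N x) := by
  induction x using Projectivization.ind with
  | h v hv =>
    rw [act, act, act, Projectivization.map_mk, Projectivization.map_mk,
      Projectivization.map_mk]
    apply mk_congr
    simp [glq, _root_.map_mul, Matrix.mulVecLin_mul]

lemma act_one (x : P1Q) : act 1 x = x := by
  induction x using Projectivization.ind with
  | h v hv =>
    rw [act, Projectivization.map_mk]
    apply mk_congr
    simp [glq, _root_.map_one]

lemma mk_eq_ratPt (x y : ℚ) (hy : y ≠ 0) (h : ![x, y] ≠ 0) :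
    Projectivization.mk ℚ ![x, y] h = ratPt (x / y) := by
  rw [ratPt, Projectivization.mk_eq_mk_iff']
  refine ⟨y, ?_⟩
  funext i
  fin_cases i <;> simp [hy, mul_div_cancel₀, mul_comm]

lemma mk_eq_infty (x : ℚ) (hx : x ≠ 0) (h : ![x, 0] ≠ 0) :
    Projectivization.mk ℚ ![x, 0] h = infty := by
  rw [infty, Projectivization.mk_eq_mk_iff']
  exact ⟨x, by funext i; fin_cases i <;> simp⟩

lemma ratPt_half : act Bhalf infty = ratPt (1 / 2) := by
  rw [infty]
  rw [act_mk Bhalf 1 0 1 2 _ (ne_zero_of_snd (by norm_num)) (by simp [Bhalf]) (by simp [Bhalf])]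
  rw [mk_eq_ratPt _ _ (by norm_num)]

/-! ### The reachability predicate -/

/-- `Reach x` iff `x` is in the `Γ̂`-orbit of `1/2` or of `∞`. -/
def Reach (x : P1Q) : Prop :=
  ∃ M ∈ GammaHat Bhalf,
    act M (ratPt (1 / 2)) = x ∨ act M infty = x

lemma Reach.act_mem {x : P1Q} {g : GL2Z} (hg : g ∈ GammaHat Bhalf) (h : Reach x) :
    Reach (act g x) := by
  obtain ⟨M, hM, hcase⟩ := h
  refine ⟨g * M, mul_mem hg hM, ?_⟩
  rcases hcase with h' | h'
  · exact Or.inl (by rw [act_mul, h'])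
  · exact Or.inr (by rw [act_mul, h'])

lemma Reach.act_B {x : P1Q} (h : Reach x) : Reach (act Bhalf x) := by
  obtain ⟨M, hM, hcase⟩ := h
  rcases hcase with h' | h'
  · -- 1/2 branch: use N = B * M * B, infinity branch for B x
    have hmem : Bhalf * M * Bhalf ∈ GammaHat Bhalf := by
      have he : Bhalf * M * Bhalf = (Bhalf * M * Bhalf⁻¹) * (Bhalf * Bhalf) := by group
      rw [he]; exact mul_mem (conjB_mem hM) memB2
    refine ⟨Bhalf * M * Bhalf, hmem, Or.inr ?_⟩
    calc act (Bhalf * M * Bhalf) infty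
        = act (Bhalf * M) (act Bhalf infty) := act_mul _ _ _
      _ = act (Bhalf * M) (ratPt (1 / 2)) := by rw [ratPt_half]
      _ = act Bhalf (act M (ratPt (1 / 2))) := act_mul _ _ _
      _ = act Bhalf x := by rw [h']
  · -- infinity branch: use N = B * M * B⁻¹, 1/2 branch for B x
    refine ⟨Bhalf * M * Bhalf⁻¹, conjB_mem hM, Or.inl ?_⟩
    have he : Bhalf * M * Bhalf⁻¹ * Bhalf = Bhalf * M := by group
    calc act (Bhalf * M * Bhalf⁻¹) (ratPt (1 / 2))
        = act (Bhalf * M * Bhalf⁻¹) (act Bhalf infty) := by rw [ratPt_half]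
      _ = act (Bhalf * M * Bhalf⁻¹ * Bhalf) infty := (act_mul _ _ _).symm
      _ = act (Bhalf * M) infty := by rw [he]
      _ = act Bhalf (act M infty) := act_mul _ _ _
      _ = act Bhalf x := by rw [h']

lemma Reach.act_Binv {x : P1Q} (h : Reach x) : Reach (act Bhalf⁻¹ x) := by
  obtain ⟨M, hM, hcase⟩ := h
  rcases hcase with h' | h'
  · -- 1/2 branch: use N = B⁻¹ * M, B⁻¹ x on the 1/2 branch
    refine ⟨Bhalf⁻¹ * M * Bhalf, conjBinv_mem hM, Or.inr ?_⟩
    have he : Bhalf⁻¹ * M * Bhalf = Bhalf⁻¹ * M * Bhalf := rfl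
    calc act (Bhalf⁻¹ * M * Bhalf) infty
        = act (Bhalf⁻¹ * M) (act Bhalf infty) := act_mul _ _ _
      _ = act (Bhalf⁻¹ * M) (ratPt (1 / 2)) := by rw [ratPt_half]
      _ = act Bhalf⁻¹ (act M (ratPt (1 / 2))) := act_mul _ _ _
      _ = act Bhalf⁻¹ x := by rw [h']
  · -- infinity branch: use N = B⁻¹ * M * B⁻¹, 1/2 branch
    have hmem : Bhalf⁻¹ * M * Bhalf⁻¹ ∈ GammaHat Bhalf := by
      have he : Bhalf⁻¹ * M * Bhalf⁻¹ = (Bhalf⁻¹ * M * Bhalf) * (Bhalf * Bhalf)⁻¹ := by group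
      rw [he]; exact mul_mem (conjBinv_mem hM) (inv_mem memB2)
    refine ⟨Bhalf⁻¹ * M * Bhalf⁻¹, hmem, Or.inl ?_⟩
    have he : Bhalf⁻¹ * M * Bhalf⁻¹ * Bhalf = Bhalf⁻¹ * M := by group
    calc act (Bhalf⁻¹ * M * Bhalf⁻¹) (ratPt (1 / 2))
        = act (Bhalf⁻¹ * M * Bhalf⁻¹) (act Bhalf infty) := by rw [ratPt_half]
      _ = act (Bhalf⁻¹ * M * Bhalf⁻¹ * Bhalf) infty := (act_mul _ _ _).symm
      _ = act (Bhalf⁻¹ * M) infty := by rw [he]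
      _ = act Bhalf⁻¹ (act M infty) := act_mul _ _ _
      _ = act Bhalf⁻¹ x := by rw [h']

/-! ### Action of specific matrices -/

lemma act_T (x y x' y' : ℚ) (hv : ![x,y] ≠ 0) (hv' : ![x',y'] ≠ 0)
    (hx : x + 2*y = x') (hy : y = y') :
    act Tmat (Projectivization.mk ℚ ![x,y] hv) = Projectivization.mk ℚ ![x',y'] hv' :=
  act_mk _ _ _ _ _ _ _ (by simp [Tmat]; push_cast; linarith) (by simp [Tmat]; push_cast; linarith)

lemma act_Tinv (x y x' y' : ℚ) (hv : ![x,y] ≠ 0) (hv' : ![x',y'] ≠ 0)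
    (hx : x - 2*y = x') (hy : y = y') :
    act Tmat⁻¹ (Projectivization.mk ℚ ![x,y] hv) = Projectivization.mk ℚ ![x',y'] hv' :=
  act_mk _ _ _ _ _ _ _ (by simp [Tmat, Units.inv_mk]; push_cast; linarith)
    (by simp [Tmat, Units.inv_mk]; push_cast; linarith)

lemma act_B (x y x' y' : ℚ) (hv : ![x,y] ≠ 0) (hv' : ![x',y'] ≠ 0)
    (hx : x = x') (hy : 2*x + y = y') :
    act Bhalf (Projectivization.mk ℚ ![x,y] hv) = Projectivization.mk ℚ ![x',y'] hv' :=
  act_mk _ _ _ _ _ _ _ (by simp [Bhalf]; push_cast; linarith) (by simp [Bhalf]; push_cast; linarith)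

lemma act_Binv (x y x' y' : ℚ) (hv : ![x,y] ≠ 0) (hv' : ![x',y'] ≠ 0)
    (hx : x = x') (hy : -(2*x) + y = y') :
    act Bhalf⁻¹ (Projectivization.mk ℚ ![x,y] hv) = Projectivization.mk ℚ ![x',y'] hv' :=
  act_mk _ _ _ _ _ _ _ (by simp [Bhalf, Units.inv_mk]; push_cast; linarith)
    (by simp [Bhalf, Units.inv_mk]; push_cast; linarith)

/-! ### gcd helpers -/

lemma gcd_shift_right (q p k : ℤ) (h : Int.gcd q p = 1) : Int.gcd q (p + k*q) = 1 := by
  rw [← Int.isCoprime_iff_gcd_eq_one] at h ⊢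
  exact h.add_mul_right_right k

lemma gcd_shift_left (q p k : ℤ) (h : Int.gcd q p = 1) : Int.gcd (q + k*p) p = 1 := by
  rw [Int.gcd_comm] at h ⊢
  exact gcd_shift_right p q k h

/-! ### The descent -/

lemma reach_infty : Reach infty := ⟨1, one_mem _, Or.inr (act_one _)⟩

lemma reach_int : ∀ (n : ℕ) (q p : ℤ), q.natAbs + p.natAbs ≤ n → Odd q → Even p →
    Int.gcd q p = 1 → ∀ hv : (![(q:ℚ),(p:ℚ)] ≠ 0),
    Reach (Projectivization.mk ℚ ![(q:ℚ),(p:ℚ)] hv) := by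
  intro n
  induction n with
  | zero =>
    intro q p hn hodd _ _ _
    obtain ⟨a, ha⟩ := hodd
    omega
  | succ n ih =>
    intro q p hn hodd heven hgcd hv
    obtain ⟨a, ha⟩ := hodd
    obtain ⟨b, hb⟩ := heven
    have hq0 : q ≠ 0 := by omega
    have hq0' : (q:ℚ) ≠ 0 := Int.cast_ne_zero.mpr hq0
    by_cases hp0 : p = 0
    · subst hp0
      have heq : (![(q:ℚ), ((0:ℤ):ℚ)]) = ![(q:ℚ), 0] := by norm_num
      rw [mk_congr _ _ heq, mk_eq_infty _ hq0']
      exact reach_infty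
    · rcases Nat.lt_trichotomy q.natAbs p.natAbs with hlt | heq | hgt
      · -- |q| < |p| : reduce p
        have hchoice : (p - 2*q).natAbs < p.natAbs ∨ (p + 2*q).natAbs < p.natAbs := by
          omega
        rcases hchoice with hc | hc
        · have hprev := ih q (p - 2*q) (by omega) ⟨a, ha⟩ ⟨b - q, by omega⟩
            (by have h2 := gcd_shift_right q p (-2) hgcd
                have : p + (-2)*q = p - 2*q := by ring
                rwa [this] at h2)
            (ne_zero_of_fst hq0')
          have key := hprev.act_B
          rwa [act_B _ _ (q:ℚ) (p:ℚ) _ hv rfl (by push_cast; ring)] at key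
        · have hprev := ih q (p + 2*q) (by omega) ⟨a, ha⟩ ⟨b + q, by omega⟩
            (by have h2 := gcd_shift_right q p 2 hgcd
                have : p + 2*q = p + 2*q := rfl
                rwa [this] at h2)
            (ne_zero_of_fst hq0')
          have key := hprev.act_Binv
          rwa [act_Binv _ _ (q:ℚ) (p:ℚ) _ hv rfl (by push_cast; ring)] at key
      · -- impossible by parity
        omega
      · -- |q| > |p| : reduce q
        have hchoice : (q - 2*p).natAbs < q.natAbs ∨ (q + 2*p).natAbs < q.natAbs := by
          omega
        rcases hchoice with hc | hc
        · have hprev := ih (q - 2*p) p (by omega) ⟨a - p, by omega⟩ ⟨b, hb⟩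
            (by have h2 := gcd_shift_left q p (-2) hgcd
                have : q + (-2)*p = q - 2*p := by ring
                rwa [this] at h2)
            (ne_zero_of_fst (Int.cast_ne_zero.mpr (by omega)))
          have key := hprev.act_mem memT
          rwa [act_T _ _ (q:ℚ) (p:ℚ) _ hv (by push_cast; ring) rfl] at key
        · have hprev := ih (q + 2*p) p (by omega) ⟨a + p, by omega⟩ ⟨b, hb⟩
            (gcd_shift_left q p 2 hgcd)
            (ne_zero_of_fst (Int.cast_ne_zero.mpr (by omega)))
          have key := hprev.act_mem (inv_mem memT)
          rwa [act_Tinv _ _ (q:ℚ) (p:ℚ) _ hv (by push_cast; ring) rfl] at key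

/-! ### Reduction mod 2 -/

def red2 : GL2Z →* Matrix.GeneralLinearGroup (Fin 2) (ZMod 2) :=
  Matrix.GeneralLinearGroup.map (Int.castRingHom (ZMod 2))

lemma gammaHat_le_ker : GammaHat Bhalf ≤ red2.ker := by
  have hInf : GammaInf ≤ red2.ker := by
    rw [GammaInf, Subgroup.closure_le]
    rintro x (rfl | rfl) <;>
      · show _ ∈ red2.ker
        rw [MonoidHom.mem_ker]
        ext : 1
        decide
  apply sup_le _ hInf
  rw [Gamma, Subgroup.map_le_iff_le_comap]
  intro x hx
  rw [Subgroup.mem_comap]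
  have hxk : x ∈ red2.ker := hInf hx
  rw [MonoidHom.mem_ker] at hxk ⊢
  have hc : (MulAut.conj Bhalf).toMonoidHom x = Bhalf * x * Bhalf⁻¹ := rfl
  rw [hc, _root_.map_mul, _root_.map_mul, _root_.map_inv, hxk]
  have hB : red2 Bhalf = 1 := by ext : 1; decide
  rw [hB]
  group

lemma parity_conclude (X Y q' p' : ℤ) (hX : (X : ZMod 2) = 1) (hY : (Y : ZMod 2) = 0)
    (hp : (1:ℤ) ≤ p') (hne : (![(X:ℚ), (Y:ℚ)] : Fin 2 → ℚ) ≠ 0)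
    (h : Projectivization.mk ℚ ![(X:ℚ), (Y:ℚ)] hne = ratPt ((q':ℚ)/(p':ℚ))) : Even p' := by
  have hp0 : ((p':ℚ)) ≠ 0 := Int.cast_ne_zero.mpr (by omega)
  rw [← mk_eq_ratPt (q':ℚ) (p':ℚ) hp0 (ne_zero_of_snd hp0),
    Projectivization.mk_eq_mk_iff'] at h
  obtain ⟨t, ht⟩ := h
  have h0 := congrFun ht 0
  have h1 := congrFun ht 1
  simp only [Pi.smul_apply, smul_eq_mul, Matrix.cons_val_zero, Matrix.cons_val_one,
    Matrix.head_cons] at h0 h1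
  have key : (X:ℚ) * (p':ℚ) = (Y:ℚ) * (q':ℚ) := by rw [← h0, ← h1]; ring
  have keyZ : X * p' = Y * q' := by exact_mod_cast key
  have key2 : ((X * p' : ℤ) : ZMod 2) = ((Y * q' : ℤ) : ZMod 2) := by rw [keyZ]
  push_cast at key2
  rw [hX, hY] at key2
  simp at key2
  rw [ZMod.intCast_zmod_eq_zero_iff_dvd] at key2
  obtain ⟨k, hk⟩ := key2
  exact ⟨k, by omega⟩

/-- **Example 3.3 (the Hopf link case `r = 1/2`).** For coprime `q̃, p̃` with `p̃ ≥ 1`,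
the point `q̃/p̃ ∈ ℙ¹(ℚ)` belongs to the `Γ̂_{1/2}`-orbit of `1/2` or of `∞` if and
only if `p̃` is even. -/
theorem mem_orbit_half_iff_even (q' p' : ℤ) (hp' : 1 ≤ p') (hqp' : Int.gcd q' p' = 1) :
    (∃ M ∈ GammaHat Bhalf,
        act M (ratPt (1 / 2)) = ratPt ((q' : ℚ) / (p' : ℚ)) ∨
        act M infty = ratPt ((q' : ℚ) / (p' : ℚ))) ↔
      Even p' := by
  constructor
  · rintro ⟨M, hM, hcase⟩
    have hker : red2 M = 1 := gammaHat_le_ker hM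
    have hval : (M.val).map (Int.cast : ℤ → ZMod 2) = 1 := congrArg Units.val hker
    have ha : ((M.val 0 0 : ℤ) : ZMod 2) = 1 := by
      have := congrFun (congrFun hval 0) 0
      simpa [Matrix.map_apply, Matrix.one_apply] using this
    have hb : ((M.val 0 1 : ℤ) : ZMod 2) = 0 := by
      have := congrFun (congrFun hval 0) 1
      simpa [Matrix.map_apply, Matrix.one_apply] using this
    have hc : ((M.val 1 0 : ℤ) : ZMod 2) = 0 := by
      have := congrFun (congrFun hval 1) 0
      simpa [Matrix.map_apply, Matrix.one_apply] using this
    have hd : ((M.val 1 1 : ℤ) : ZMod 2) = 1 := by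
      have := congrFun (congrFun hval 1) 1
      simpa [Matrix.map_apply, Matrix.one_apply] using this
    rcases hcase with h' | h'
    · -- the 1/2 branch
      set X : ℤ := M.val 0 0 + 2 * M.val 0 1 with hXdef
      set Y : ℤ := M.val 1 0 + 2 * M.val 1 1 with hYdef
      have hX2 : (X : ZMod 2) = 1 := by
        rw [hXdef]; push_cast; rw [ha, hb]; decide
      have hY2 : (Y : ZMod 2) = 0 := by
        rw [hYdef]; push_cast; rw [hc, hd]; decide
      have hXne : ((X:ℚ)) ≠ 0 := by
        rw [Int.cast_ne_zero]
        intro h0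
        rw [h0] at hX2
        simp at hX2
      have hne' : (![(X:ℚ), (Y:ℚ)] : Fin 2 → ℚ) ≠ 0 := ne_zero_of_fst hXne
      have h2ne : ((2:ℚ)) ≠ 0 := by norm_num
      rw [← mk_eq_ratPt 1 2 h2ne (ne_zero_of_snd h2ne)] at h'
      rw [act_mk M 1 2 (X:ℚ) (Y:ℚ) _ hne' (by rw [hXdef]; push_cast; ring)
        (by rw [hYdef]; push_cast; ring)] at h'
      exact parity_conclude X Y q' p' hX2 hY2 hp' hne' h'
    · -- the infinity branch
      have hXne : ((M.val 0 0 : ℤ):ℚ) ≠ 0 := by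
        rw [Int.cast_ne_zero]
        intro h0
        rw [h0] at ha
        simp at ha
      have hne' : (![(M.val 0 0 :ℚ), (M.val 1 0 :ℚ)] : Fin 2 → ℚ) ≠ 0 := ne_zero_of_fst hXne
      rw [infty] at h'
      rw [act_mk M 1 0 (M.val 0 0 : ℚ) (M.val 1 0 : ℚ) _ hne' (by push_cast; ring)
        (by push_cast; ring)] at h'
      exact parity_conclude _ _ q' p' ha hc hp' hne' h'
  · intro hEven
    have hq'odd : Odd q' := by
      rcases Int.even_or_odd q' with he | ho
      · exfalso
        obtain ⟨u, hu⟩ := he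
        obtain ⟨v, hv⟩ := hEven
        have h2 : (2:ℤ) ∣ (Int.gcd q' p' : ℤ) :=
          Int.dvd_coe_gcd ⟨u, by omega⟩ ⟨v, by omega⟩
        rw [hqp'] at h2
        norm_num at h2
      · exact ho
    have hp0 : ((p':ℚ)) ≠ 0 := Int.cast_ne_zero.mpr (by omega)
    have h := reach_int (q'.natAbs + p'.natAbs) q' p' le_rfl hq'odd hEven hqp'
      (ne_zero_of_snd hp0)
    rwa [mk_eq_ratPt (q':ℚ) (p':ℚ) hp0] at h
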